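/- Let U(t) = t^ξ L(t) with L slowly varying, differentiable with ultimately monotone derivative L', and suppose U ∈ 2RV_{ξ,ρ}(a) with ξ > 0, ρ ≤ 0 and auxiliary function a of ultimately constant sign. Then a(t) ~ tU'(t)/U(t) - ξ as t → ∞; in particular ã(t) = tU'(t)/U(t) - ξ is also a valid auxiliary function for U. -/

import Mathlib

open Filter Topology Set


/-- Monotone density theorem for extended regular variation, via MVT. -/
lemma aux_md (f α h : ℝ → ℝ) (T : ℝ)
    (hf : Differentiable ℝ f)
    (hmono : MonotoneOn (deriv f) (Ici T) ∨ AntitoneOn (deriv f) (Ici T))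
    (hR : ∀ s : ℝ, 0 < s → s ≠ 1 →
      Tendsto (fun t => (f (t * s) - f t) / ((s - 1) * α t)) atTop (𝓝 (h s)))
    (hh : Tendsto h (𝓝[≠] (1:ℝ)) (𝓝 1)) :
    Tendsto (fun t => t * deriv f t / α t) atTop (𝓝 1) := by
  rw [Metric.tendsto_nhds]
  intro ε hε
  obtain ⟨δ, hδ0, hδ⟩ := Metric.tendsto_nhdsWithin_nhds.mp hh (ε/2) (by positivity)
  obtain ⟨δ', hδ'def⟩ : ∃ x : ℝ, x = min δ 1 := ⟨_, rfl⟩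
  have hδ'0 : 0 < δ' := hδ'def ▸ lt_min hδ0 one_pos
  have hδ'1 : δ' ≤ 1 := hδ'def ▸ min_le_right _ _
  have hδ'δ : δ' ≤ δ := hδ'def ▸ min_le_left _ _
  obtain ⟨sp, hspdef⟩ : ∃ x : ℝ, x = 1 + δ'/2 := ⟨_, rfl⟩
  obtain ⟨sm, hsmdef⟩ : ∃ x : ℝ, x = 1 - δ'/2 := ⟨_, rfl⟩
  have hsp1 : 1 < sp := by rw [hspdef]; linarith
  have hsm1 : sm < 1 := by rw [hsmdef]; linarith
  have hsmhalf : 1/2 ≤ sm := by rw [hsmdef]; linarith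
  have hsp0 : 0 < sp := by linarith
  have hsm0 : 0 < sm := by linarith
  have hspne : sp ≠ 1 := ne_of_gt hsp1
  have hsmne : sm ≠ 1 := ne_of_lt hsm1
  have hdsp : dist sp 1 < δ := by
    rw [Real.dist_eq, abs_lt]; constructor <;> rw [hspdef] <;> linarith
  have hdsm : dist sm 1 < δ := by
    rw [Real.dist_eq, abs_lt]; constructor <;> rw [hsmdef] <;> linarith
  have hhsp : dist (h sp) 1 < ε/2 := hδ hspne hdsp
  have hhsm : dist (h sm) 1 < ε/2 := hδ hsmne hdsm
  have E1 : ∀ᶠ t in atTop, dist ((f (t * sp) - f t) / ((sp - 1) * α t)) 1 < ε := by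
    filter_upwards [Metric.tendsto_nhds.mp (hR sp hsp0 hspne) (ε/2) (by positivity)] with t ht
    calc dist ((f (t * sp) - f t) / ((sp - 1) * α t)) 1
        ≤ dist ((f (t * sp) - f t) / ((sp - 1) * α t)) (h sp) + dist (h sp) 1 := dist_triangle _ _ _
      _ < ε/2 + ε/2 := by exact add_lt_add ht hhsp
      _ = ε := by ring
  have E2 : ∀ᶠ t in atTop, dist ((f (t * sm) - f t) / ((sm - 1) * α t)) 1 < ε := by
    filter_upwards [Metric.tendsto_nhds.mp (hR sm hsm0 hsmne) (ε/2) (by positivity)] with t ht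
    calc dist ((f (t * sm) - f t) / ((sm - 1) * α t)) 1
        ≤ dist ((f (t * sm) - f t) / ((sm - 1) * α t)) (h sm) + dist (h sm) 1 := dist_triangle _ _ _
      _ < ε/2 + ε/2 := by exact add_lt_add ht hhsm
      _ = ε := by ring
  filter_upwards [E1, E2, eventually_ge_atTop (max 1 (2 * |T|))] with t hu hv ht
  have ht1 : (1:ℝ) ≤ t := le_trans (le_max_left _ _) ht
  have htT : 2 * |T| ≤ t := le_trans (le_max_right _ _) ht
  have ht0 : 0 < t := lt_of_lt_of_le one_pos ht1
  have habs : T ≤ |T| := le_abs_self T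
  have htp : t < t * sp := by nlinarith
  have htm : t * sm < t := by nlinarith
  have hTtm : T ≤ t * sm := by nlinarith [mul_le_mul_of_nonneg_left hsmhalf ht0.le]
  have hTt : T ≤ t := by nlinarith
  obtain ⟨cp, hcp, hdcp⟩ := exists_hasDerivAt_eq_slope f (deriv f) htp
    hf.continuous.continuousOn (fun x _ => (hf x).hasDerivAt)
  obtain ⟨cm, hcm, hdcm⟩ := exists_hasDerivAt_eq_slope f (deriv f) htm
    hf.continuous.continuousOn (fun x _ => (hf x).hasDerivAt)
  have hnump : f (t * sp) - f t = (sp - 1) * (deriv f cp * t) := by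
    have h1 : t * sp - t ≠ 0 := sub_ne_zero.mpr htp.ne'
    have h2 : f (t * sp) - f t = deriv f cp * (t * sp - t) := (div_eq_iff h1).mp hdcp.symm
    linear_combination h2
  have hnumm : f (t * sm) - f t = (sm - 1) * (deriv f cm * t) := by
    have h1 : t - t * sm ≠ 0 := sub_ne_zero.mpr htm.ne'
    have h2 : f t - f (t * sm) = deriv f cm * (t - t * sm) := (div_eq_iff h1).mp hdcm.symm
    linear_combination -h2
  rw [hnump, mul_div_mul_left _ _ (sub_ne_zero.mpr hspne)] at hu
  rw [hnumm, mul_div_mul_left _ _ (sub_ne_zero.mpr hsmne)] at hv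
  -- rewrite everything as d * (t / α t)
  have hrw : ∀ d : ℝ, d * t / α t = d * (t / α t) := fun d => mul_div_assoc d t (α t)
  rw [hrw] at hu hv
  have hrw2 : t * deriv f t / α t = deriv f t * (t / α t) := by
    rw [mul_comm t (deriv f t)]; exact hrw _
  rw [hrw2]
  set k := t / α t
  -- memberships
  have hmcm : cm ∈ Ici T := le_trans hTtm hcm.1.le
  have hmt : t ∈ Ici T := hTt
  have hmcp : cp ∈ Ici T := le_trans hTt hcp.1.le
  have hbet : (deriv f cm * k ≤ deriv f t * k ∧ deriv f t * k ≤ deriv f cp * k) ∨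
      (deriv f cp * k ≤ deriv f t * k ∧ deriv f t * k ≤ deriv f cm * k) := by
    rcases hmono with hm | hm
    · have h1 : deriv f cm ≤ deriv f t := hm hmcm hmt hcm.2.le
      have h2 : deriv f t ≤ deriv f cp := hm hmt hmcp hcp.1.le
      rcases le_or_gt 0 k with hk | hk
      · exact Or.inl ⟨mul_le_mul_of_nonneg_right h1 hk, mul_le_mul_of_nonneg_right h2 hk⟩
      · exact Or.inr ⟨mul_le_mul_of_nonpos_right h2 hk.le, mul_le_mul_of_nonpos_right h1 hk.le⟩
    · have h1 : deriv f t ≤ deriv f cm := hm hmcm hmt hcm.2.le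
      have h2 : deriv f cp ≤ deriv f t := hm hmt hmcp hcp.1.le
      rcases le_or_gt 0 k with hk | hk
      · exact Or.inr ⟨mul_le_mul_of_nonneg_right h2 hk, mul_le_mul_of_nonneg_right h1 hk⟩
      · exact Or.inl ⟨mul_le_mul_of_nonpos_right h1 hk.le, mul_le_mul_of_nonpos_right h2 hk.le⟩
  rw [Real.dist_eq, abs_lt] at hu hv ⊢
  rcases hbet with ⟨h1, h2⟩ | ⟨h1, h2⟩ <;> constructor <;> linarith [hu.1, hu.2, hv.1, hv.2]

/-- If `U(t) = t^ξ L(t)` with `L` slowly varying, differentiable with ultimately monotone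
derivative, and `U ∈ 2RV_{ξ,ρ}(a)` with auxiliary function `a` of ultimately constant sign,
then `a(t) ~ tU'(t)/U(t) - ξ`; in particular `tU'(t)/U(t) - ξ` is also a valid auxiliary
function for `U`. -/
theorem stmt8 (U L a : ℝ → ℝ) (ξ ρ : ℝ) (hξ : 0 < ξ) (hρ : ρ ≤ 0)
    (hU : ∀ t > (0:ℝ), U t = t ^ ξ * L t)
    (hL : ∀ x > (0:ℝ), Tendsto (fun t => L (t * x) / L t) atTop (𝓝 1))
    (hdiff : Differentiable ℝ L)
    (hmono : ∃ T : ℝ, MonotoneOn (deriv L) (Ici T) ∨ AntitoneOn (deriv L) (Ici T))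
    (ha0 : Tendsto a atTop (𝓝 0))
    (hsign : ∃ T : ℝ, (∀ t ≥ T, 0 < a t) ∨ ∀ t ≥ T, a t < 0)
    (h2RV : ∀ s > (0:ℝ), Tendsto (fun t => (U (t * s) / U t - s ^ ξ) / a t) atTop
      (𝓝 (if ρ = 0 then s ^ ξ * Real.log s else s ^ ξ * (s ^ ρ - 1) / ρ))) :
    Tendsto (fun t => (t * deriv U t / U t - ξ) / a t) atTop (𝓝 1) ∧
    ∀ s > (0:ℝ), Tendsto
      (fun t => (U (t * s) / U t - s ^ ξ) / (t * deriv U t / U t - ξ)) atTop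
      (𝓝 (if ρ = 0 then s ^ ξ * Real.log s else s ^ ξ * (s ^ ρ - 1) / ρ)) := by
  -- eventually L t ≠ 0
  have hLne : ∀ᶠ t in atTop, L t ≠ 0 := by
    filter_upwards [(hL 1 one_pos).eventually_ne (one_ne_zero)] with t ht h0
    exact ht (by simp [h0])
  -- eventually a t ≠ 0
  have haT : ∀ᶠ t in atTop, a t ≠ 0 := by
    obtain ⟨T, hT⟩ := hsign
    filter_upwards [eventually_ge_atTop T] with t ht
    rcases hT with h | h
    exacts [(h t ht).ne', (h t ht).ne]
  -- the key identity for tU'/U - ξ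
  have hphi : ∀ᶠ t in atTop, t * deriv U t / U t - ξ = t * deriv L t / L t := by
    filter_upwards [hLne, eventually_gt_atTop 0] with t hLt ht0
    have hUev : U =ᶠ[𝓝 t] fun x => x ^ ξ * L x := by
      filter_upwards [Ioi_mem_nhds ht0] with x hx using hU x hx
    have hd : deriv U t = ξ * t ^ (ξ - 1) * L t + t ^ ξ * deriv L t := by
      rw [hUev.deriv_eq]
      exact ((Real.hasDerivAt_rpow_const (Or.inl ht0.ne')).mul (hdiff t).hasDerivAt).deriv
    have htξ : t ^ ξ ≠ 0 := (Real.rpow_pos_of_pos ht0 ξ).ne'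
    have ht2 : t * t ^ (ξ - 1) = t ^ ξ := by
      rw [Real.rpow_sub ht0, Real.rpow_one]
      field_simp
    have hnum : t * (ξ * t ^ (ξ - 1) * L t + t ^ ξ * deriv L t)
        = t ^ ξ * (ξ * L t + t * deriv L t) := by
      rw [← ht2]; ring
    rw [hd, hU t ht0, hnum, mul_div_mul_left _ _ htξ]
    field_simp
    ring
  -- the transformed second-order condition for L
  have hRL : ∀ s : ℝ, 0 < s → s ≠ 1 →
      Tendsto (fun t => (L (t * s) - L t) / ((s - 1) * (a t * L t))) atTop
        (𝓝 ((if ρ = 0 then Real.log s else (s ^ ρ - 1) / ρ) / (s - 1))) := by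
    intro s hs hs1
    have hsx : (s:ℝ) ^ ξ ≠ 0 := (Real.rpow_pos_of_pos hs ξ).ne'
    have hs1' : s - 1 ≠ 0 := sub_ne_zero.mpr hs1
    have hkey := (h2RV s hs).mul_const (1 / (s ^ ξ * (s - 1)))
    have hlim : (if ρ = 0 then s ^ ξ * Real.log s else s ^ ξ * (s ^ ρ - 1) / ρ)
        * (1 / (s ^ ξ * (s - 1)))
        = (if ρ = 0 then Real.log s else (s ^ ρ - 1) / ρ) / (s - 1) := by
      by_cases h0 : ρ = 0 <;> simp only [h0, if_true, if_false] <;> field_simp <;> ring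
    rw [hlim] at hkey
    apply hkey.congr'
    filter_upwards [hLne, eventually_gt_atTop 0] with t hLt ht0
    have htξ : t ^ ξ ≠ 0 := (Real.rpow_pos_of_pos ht0 ξ).ne'
    have hU1 : U t = t ^ ξ * L t := hU t ht0
    have hU2 : U (t * s) = t ^ ξ * (s ^ ξ * L (t * s)) := by
      rw [hU (t * s) (by positivity), Real.mul_rpow ht0.le hs.le]; ring
    have hq : U (t * s) / U t - s ^ ξ = s ^ ξ * ((L (t * s) - L t) / L t) := by
      rw [hU1, hU2, mul_div_mul_left _ _ htξ]
      field_simp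
    rw [hq]
    rcases eq_or_ne (a t) 0 with h0 | h0
    · simp [h0]
    · field_simp
  -- the limit of the normalized kernel near 1
  have hh : Tendsto (fun s => (if ρ = 0 then Real.log s else (s ^ ρ - 1) / ρ) / (s - 1))
      (𝓝[≠] (1:ℝ)) (𝓝 1) := by
    by_cases h0 : ρ = 0
    · simp only [h0, if_true]
      have hder : HasDerivAt Real.log 1 1 := by
        simpa using Real.hasDerivAt_log one_ne_zero
      have := hasDerivAt_iff_tendsto_slope.mp hder
      refine this.congr fun s => ?_
      simp [slope_def_field, Real.log_one, div_eq_div_iff]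
    · simp only [h0, if_false]
      have hder : HasDerivAt (fun s : ℝ => (s ^ ρ - 1) / ρ) 1 1 := by
        have h1 : HasDerivAt (fun s : ℝ => s ^ ρ) (ρ * (1:ℝ) ^ (ρ - 1)) 1 :=
          Real.hasDerivAt_rpow_const (Or.inl one_ne_zero)
        have h2 := (h1.sub_const 1).div_const ρ
        simpa [Real.one_rpow, div_self h0] using h2
      have := hasDerivAt_iff_tendsto_slope.mp hder
      refine this.congr fun s => ?_
      simp [slope_def_field, Real.one_rpow]
  obtain ⟨T, hmonoT⟩ := hmono
  have hmd := aux_md L (fun t => a t * L t) _ T hdiff hmonoT hRL hh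
  have part1 : Tendsto (fun t => (t * deriv U t / U t - ξ) / a t) atTop (𝓝 1) := by
    apply hmd.congr'
    filter_upwards [hphi] with t ht
    rw [ht, div_div, mul_comm (L t) (a t)]
  refine ⟨part1, fun s hs => ?_⟩
  have hne2 : ∀ᶠ t in atTop, (t * deriv U t / U t - ξ) / a t ≠ 0 :=
    part1.eventually_ne one_ne_zero
  have hfin := (h2RV s hs).div part1 one_ne_zero
  rw [div_one] at hfin
  apply hfin.congr'
  filter_upwards [haT, hne2] with t ha hne
  have hY : t * deriv U t / U t - ξ ≠ 0 := by
    intro h0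
    exact hne (by rw [h0, zero_div])
  simp only [Pi.div_apply]
  field_simp
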